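/- For all trace-zero 3×3 complex matrices x and y, the Okubo product x ⋆ y again has trace zero, and the Okubo norm is multiplicative: n(x ⋆ y) = n(x)·n(y). -/

import Mathlib

open Matrix

/-- The primitive cube root of unity `ω = exp(2πi/3)`. -/
noncomputable def okuboOmega : ℂ := Complex.exp (2 * Real.pi * Complex.I / 3)

/-- `μ = (1 − ω)/3`. -/
noncomputable def okuboMu : ℂ := (1 - okuboOmega) / 3

/-- The Okubo product on 3×3 complex matrices:
`x ⋆ y = μ·(xy) + (1−μ)·(yx) − (1/3)·tr(xy)·I`. -/
noncomputable def okuboMul (x y : Matrix (Fin 3) (Fin 3) ℂ) : Matrix (Fin 3) (Fin 3) ℂ :=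
  okuboMu • (x * y) + (1 - okuboMu) • (y * x) - ((1 / 3 : ℂ) * (x * y).trace) • (1 : Matrix (Fin 3) (Fin 3) ℂ)

/-- The Okubo norm `n(x) = (1/6)·tr(x²)`. -/
noncomputable def okuboNorm (x : Matrix (Fin 3) (Fin 3) ℂ) : ℂ := (1 / 6 : ℂ) * (x * x).trace

lemma okubo_mu_sq : okuboMu ^ 2 = okuboMu - 1/3 := by
  have h3 : okuboOmega ^ 3 = 1 := by
    have := Complex.isPrimitiveRoot_exp 3 (by norm_num)
    simpa [okuboOmega] using this.pow_eq_one
  have hne : okuboOmega ≠ 1 := by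
    have := Complex.isPrimitiveRoot_exp 3 (by norm_num)
    have h := this.ne_one (by norm_num)
    simpa [okuboOmega] using h
  have hq : okuboOmega ^ 2 + okuboOmega + 1 = 0 := by
    have : (okuboOmega - 1) * (okuboOmega ^ 2 + okuboOmega + 1) = 0 := by ring_nf; linear_combination h3
    rcases mul_eq_zero.mp this with h | h
    · exact absurd (sub_eq_zero.mp h) hne
    · exact h
  unfold okuboMu
  field_simp
  linear_combination hq

lemma okubo_key (x y : Matrix (Fin 3) (Fin 3) ℂ) (hx : x.trace = 0) (hy : y.trace = 0) :
    2 * ((x * y) * (x * y)).trace + 4 * ((x * y) * (y * x)).trace - 2 * (x * y).trace ^ 2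
      = (x * x).trace * (y * y).trace := by
  have hx' : x 2 2 = -(x 0 0 + x 1 1) := by
    simp [Matrix.trace, Fin.sum_univ_three] at hx; linear_combination hx
  have hy' : y 2 2 = -(y 0 0 + y 1 1) := by
    simp [Matrix.trace, Fin.sum_univ_three] at hy; linear_combination hy
  simp only [Matrix.trace, Matrix.diag, Matrix.mul_apply, Fin.sum_univ_three]
  rw [hx', hy']
  ring

/-- The Okubo product of two trace-zero matrices is trace-zero, and the Okubo norm is
multiplicative on trace-zero matrices. -/
theorem okubo_trace_zero_and_norm_mul
    (x y : Matrix (Fin 3) (Fin 3) ℂ) (hx : x.trace = 0) (hy : y.trace = 0) :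
    (okuboMul x y).trace = 0 ∧ okuboNorm (okuboMul x y) = okuboNorm x * okuboNorm y := by
  have ht : (okuboMul x y).trace = 0 := by
    simp only [okuboMul, Matrix.trace_sub, Matrix.trace_add, Matrix.trace_smul,
      Matrix.trace_one, smul_eq_mul, Fintype.card_fin]
    rw [Matrix.trace_mul_comm y x]
    ring
  have c1 : ((y * x) * (y * x)).trace = ((x * y) * (x * y)).trace := by
    rw [show (y * x) * (y * x) = y * (x * y) * x by noncomm_ring, Matrix.trace_mul_cycle]
  have c2 : ((y * x) * (x * y)).trace = ((x * y) * (y * x)).trace :=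
    Matrix.trace_mul_comm _ _
  have hexp : (okuboMul x y * okuboMul x y).trace =
      (okuboMu ^ 2 + (1 - okuboMu) ^ 2) * ((x * y) * (x * y)).trace
        + 2 * okuboMu * (1 - okuboMu) * ((x * y) * (y * x)).trace
        - (1 / 3) * (x * y).trace ^ 2 := by
    simp only [okuboMul, sub_mul, mul_sub, add_mul, mul_add, smul_mul_assoc, mul_smul_comm,
      smul_smul, mul_one, one_mul, Matrix.trace_sub, Matrix.trace_add, Matrix.trace_smul,
      Matrix.trace_one, smul_eq_mul, Fintype.card_fin]
    rw [c1, c2, Matrix.trace_mul_comm y x]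
    ring
  refine ⟨ht, ?_⟩
  unfold okuboNorm
  rw [hexp]
  linear_combination (1 / 36 : ℂ) * okubo_key x y hx hy
    + ((((x * y) * (x * y)).trace - ((x * y) * (y * x)).trace) / 3) * okubo_mu_sq
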